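/- Let a₁, a₂ ≥ 2 be integers with a₁ ≡ 2 (mod 3) and a₂ ≡ 0 (mod 2), and let s = 1 if a₁ is odd and s = a₂ if a₁ is even. Then there exists a set A₀ ⊆ {1,…,a₁}×{1,…,a₂} with |A₀| = (a₁a₂ + a₁ + a₂ − 2)/3 whose 3-neighbour bootstrap closure in the grid [a₁]×[a₂] equals the set of all vertices of [a₁]×[a₂] except (1,1) and (a₁,s). -/

import Mathlib

namespace BP

/-- The `r`-neighbour bootstrap closure of `A₀` in `G`: the smallest set `S` containing `A₀`
such that every vertex with at least `r` neighbours in `S` belongs to `S`. -/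
def closure {V : Type*} (G : SimpleGraph V) (r : ℕ) (A₀ : Set V) : Set V :=
  ⋂₀ {S : Set V | A₀ ⊆ S ∧ ∀ v : V, r ≤ (G.neighborSet v ∩ S).ncard → v ∈ S}

/-- `A₀` percolates under the `r`-neighbour bootstrap process in `G`. -/
def Percolates {V : Type*} (G : SimpleGraph V) (r : ℕ) (A₀ : Set V) : Prop :=
  closure G r A₀ = Set.univ

/-- The minimum cardinality of a set percolating under the `r`-neighbour process in `G`. -/
noncomputable def minPerc {V : Type*} (G : SimpleGraph V) (r : ℕ) : ℕ :=
  sInf {n : ℕ | ∃ A₀ : Set V, Percolates G r A₀ ∧ A₀.ncard = n}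

/-- The two-dimensional grid graph `[a₁] × [a₂]` (vertices indexed from `0` via `Fin`,
representing the points `1, …, aᵢ`). -/
def grid2 (a₁ a₂ : ℕ) : SimpleGraph (Fin a₁ × Fin a₂) where
  Adj u v :=
    (u.2 = v.2 ∧ ((u.1 : ℕ) + 1 = (v.1 : ℕ) ∨ (v.1 : ℕ) + 1 = (u.1 : ℕ))) ∨
    (u.1 = v.1 ∧ ((u.2 : ℕ) + 1 = (v.2 : ℕ) ∨ (v.2 : ℕ) + 1 = (u.2 : ℕ)))
  symm := by
    constructor
    rintro u v (⟨h, h'⟩ | ⟨h, h'⟩)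
    · exact Or.inl ⟨h.symm, h'.symm⟩
    · exact Or.inr ⟨h.symm, h'.symm⟩
  loopless := by
    constructor
    rintro u (⟨-, h⟩ | ⟨-, h⟩) <;> omega

/-- `m(a₁,a₂;3)`: minimum size of a percolating set for the 3-neighbour process in the grid. -/
noncomputable def m2 (a₁ a₂ : ℕ) : ℕ := minPerc (grid2 a₁ a₂) 3

/-! ### Auxiliary infrastructure -/

section general
variable {V : Type*} [Finite V] {G : SimpleGraph V} {r : ℕ} {A₀ : Set V}

lemma subset_closure : A₀ ⊆ closure G r A₀ :=
  fun _ hv => Set.mem_sInter.mpr (fun _ hS => hS.1 hv)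

lemma mem_closure_of_rule {v : V} (h : r ≤ (G.neighborSet v ∩ closure G r A₀).ncard) :
    v ∈ closure G r A₀ := by
  refine Set.mem_sInter.mpr (fun S hS => hS.2 v (le_trans h ?_))
  exact Set.ncard_le_ncard
    (fun u hu => ⟨hu.1, Set.sInter_subset_of_mem hS hu.2⟩) (Set.toFinite _)

lemma closure_subset {S : Set V} (h1 : A₀ ⊆ S)
    (h2 : ∀ v : V, r ≤ (G.neighborSet v ∩ S).ncard → v ∈ S) : closure G r A₀ ⊆ S :=
  Set.sInter_subset_of_mem ⟨h1, h2⟩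

lemma mem_closure_of_three {v u1 u2 u3 : V}
    (a1 : G.Adj v u1) (a2 : G.Adj v u2) (a3 : G.Adj v u3)
    (d12 : u1 ≠ u2) (d13 : u1 ≠ u3) (d23 : u2 ≠ u3)
    (m1 : u1 ∈ closure G 3 A₀) (m2 : u2 ∈ closure G 3 A₀) (m3 : u3 ∈ closure G 3 A₀) :
    v ∈ closure G 3 A₀ := by
  apply mem_closure_of_rule
  have hsub : ({u1, u2, u3} : Set V) ⊆ G.neighborSet v ∩ closure G 3 A₀ := by
    rintro u (rfl | rfl | rfl)
    · exact ⟨a1, m1⟩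
    · exact ⟨a2, m2⟩
    · exact ⟨a3, m3⟩
  have hcard : ({u1, u2, u3} : Set V).ncard = 3 := by
    rw [Set.ncard_insert_of_notMem (by simp [d12, d13]) (Set.toFinite _),
      Set.ncard_pair d23]
  calc (3 : ℕ) = ({u1, u2, u3} : Set V).ncard := hcard.symm
    _ ≤ _ := Set.ncard_le_ncard hsub (Set.toFinite _)

lemma ncard_inter_le_two {v : V} {S : Set V} (u1 u2 : V)
    (h : ∀ u, G.Adj v u → u = u1 ∨ u = u2) :
    (G.neighborSet v ∩ S).ncard ≤ 2 := by
  have hsub : G.neighborSet v ∩ S ⊆ {u1, u2} := fun u hu => h u hu.1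
  calc (G.neighborSet v ∩ S).ncard ≤ ({u1, u2} : Set V).ncard :=
        Set.ncard_le_ncard hsub (Set.toFinite _)
    _ ≤ ({u2} : Set V).ncard + 1 := Set.ncard_insert_le _ _
    _ ≤ 2 := by rw [Set.ncard_singleton]

end general

/-! ### The construction -/

/-- The seed set: odd-checkerboard cells, except interior cells of columns `x ≡ 2 (mod 3)`. -/
def seed (a₁ a₂ : ℕ) : Set (Fin a₁ × Fin a₂) :=
  {v | ((v.1 : ℕ) + (v.2 : ℕ)) % 2 = 1 ∧
    ¬((v.1 : ℕ) % 3 = 2 ∧ 1 ≤ (v.2 : ℕ) ∧ (v.2 : ℕ) ≤ a₂ - 2)}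

section grid
variable {a₁ a₂ : ℕ}

lemma grid2_adj {u v : Fin a₁ × Fin a₂} :
    (grid2 a₁ a₂).Adj u v ↔
      (((u.2 : ℕ) = (v.2 : ℕ) ∧ ((u.1 : ℕ) + 1 = (v.1 : ℕ) ∨ (v.1 : ℕ) + 1 = (u.1 : ℕ))) ∨
      (((u.1 : ℕ) = (v.1 : ℕ)) ∧ ((u.2 : ℕ) + 1 = (v.2 : ℕ) ∨ (v.2 : ℕ) + 1 = (u.2 : ℕ)))) := by
  constructor
  · rintro (⟨h, h'⟩ | ⟨h, h'⟩)
    · exact Or.inl ⟨congrArg Fin.val h, h'⟩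
    · exact Or.inr ⟨congrArg Fin.val h, h'⟩
  · rintro (⟨h, h'⟩ | ⟨h, h'⟩)
    · exact Or.inl ⟨Fin.ext h, h'⟩
    · exact Or.inr ⟨Fin.ext h, h'⟩

lemma mk_adj {x x' y y' : ℕ} (hx : x < a₁) (hx' : x' < a₁) (hy : y < a₂) (hy' : y' < a₂)
    (h : (y = y' ∧ (x + 1 = x' ∨ x' + 1 = x)) ∨ (x = x' ∧ (y + 1 = y' ∨ y' + 1 = y))) :
    (grid2 a₁ a₂).Adj (⟨x, hx⟩, ⟨y, hy⟩) (⟨x', hx'⟩, ⟨y', hy'⟩) := by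
  apply grid2_adj.mpr
  rcases h with ⟨h1, h2⟩ | ⟨h1, h2⟩
  · exact Or.inl ⟨h1, h2⟩
  · exact Or.inr ⟨h1, h2⟩

lemma mk_ne {x x' y y' : ℕ} {hx : x < a₁} {hx' : x' < a₁} {hy : y < a₂} {hy' : y' < a₂}
    (h : ¬(x = x' ∧ y = y')) :
    ((⟨x, hx⟩ : Fin a₁), (⟨y, hy⟩ : Fin a₂)) ≠ ((⟨x', hx'⟩ : Fin a₁), (⟨y', hy'⟩ : Fin a₂)) := by
  intro he
  rw [Prod.ext_iff] at he
  exact h ⟨congrArg Fin.val he.1, congrArg Fin.val he.2⟩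

lemma seedC (x y : ℕ) (hx : x < a₁) (hy : y < a₂)
    (h1 : (x + y) % 2 = 1) (h2 : ¬(x % 3 = 2 ∧ 1 ≤ y ∧ y ≤ a₂ - 2)) :
    ((⟨x, hx⟩ : Fin a₁), (⟨y, hy⟩ : Fin a₂)) ∈ closure (grid2 a₁ a₂) 3 (seed a₁ a₂) :=
  subset_closure ⟨h1, h2⟩

/-- Phase 1: interior vertices of "good" columns (`x % 3 ≠ 2`) are infected. -/
lemma phase1 (hm₁ : a₁ % 3 = 2) (x y : ℕ) (hx : x < a₁) (hy : y < a₂)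
    (h3 : x % 3 ≠ 2) (hy1 : 1 ≤ y) (hy2 : y ≤ a₂ - 2) :
    ((⟨x, hx⟩ : Fin a₁), (⟨y, hy⟩ : Fin a₂)) ∈ closure (grid2 a₁ a₂) 3 (seed a₁ a₂) := by
  have hym : y - 1 < a₂ := by omega
  have hyp : y + 1 < a₂ := by omega
  by_cases hpar : (x + y) % 2 = 1
  · exact seedC x y hx hy hpar (by omega)
  · by_cases hx0 : x % 3 = 0
    · have hxp : x + 1 < a₁ := by omega
      exact mem_closure_of_three
        (mk_adj hx hxp hy hy (by omega))
        (mk_adj hx hx hy hym (by omega))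
        (mk_adj hx hx hy hyp (by omega))
        (mk_ne (by omega)) (mk_ne (by omega)) (mk_ne (by omega))
        (seedC _ _ _ _ (by omega) (by omega))
        (seedC _ _ _ _ (by omega) (by omega))
        (seedC _ _ _ _ (by omega) (by omega))
    · have hx1 : 1 ≤ x := by omega
      have hxm : x - 1 < a₁ := by omega
      exact mem_closure_of_three
        (mk_adj hx hxm hy hy (by omega))
        (mk_adj hx hx hy hym (by omega))
        (mk_adj hx hx hy hyp (by omega))
        (mk_ne (by omega)) (mk_ne (by omega)) (mk_ne (by omega))
        (seedC _ _ _ _ (by omega) (by omega))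
        (seedC _ _ _ _ (by omega) (by omega))
        (seedC _ _ _ _ (by omega) (by omega))

/-- Phase 4: all of a good column (away from the boundary columns) is infected. -/
lemma phase4 (h₂ : 2 ≤ a₂) (hm₁ : a₁ % 3 = 2) (hm₂ : a₂ % 2 = 0)
    (x : ℕ) (hx : x < a₁) (h3 : x % 3 ≠ 2) (hx1 : 1 ≤ x) (hx2 : x ≤ a₁ - 2) :
    ∀ y (hy : y < a₂),
      ((⟨x, hx⟩ : Fin a₁), (⟨y, hy⟩ : Fin a₂)) ∈ closure (grid2 a₁ a₂) 3 (seed a₁ a₂) := by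
  intro y hy
  have hxm : x - 1 < a₁ := by omega
  have hxp : x + 1 < a₁ := by omega
  by_cases hy0 : y = 0
  · subst hy0
    by_cases hpar : x % 2 = 1
    · exact seedC _ _ _ _ (by omega) (by omega)
    · have h1a : (1 : ℕ) < a₂ := by omega
      exact mem_closure_of_three
        (mk_adj hx hxm hy hy (by omega))
        (mk_adj hx hxp hy hy (by omega))
        (mk_adj hx hx hy h1a (by omega))
        (mk_ne (by omega)) (mk_ne (by omega)) (mk_ne (by omega))
        (seedC _ _ _ _ (by omega) (by omega))
        (seedC _ _ _ _ (by omega) (by omega))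
        (seedC _ _ _ _ (by omega) (by omega))
  · by_cases hyt : y = a₂ - 1
    · subst hyt
      by_cases hpar : x % 2 = 0
      · exact seedC _ _ _ _ (by omega) (by omega)
      · have h2a : a₂ - 2 < a₂ := by omega
        exact mem_closure_of_three
          (mk_adj hx hxm hy hy (by omega))
          (mk_adj hx hxp hy hy (by omega))
          (mk_adj hx hx hy h2a (by omega))
          (mk_ne (by omega)) (mk_ne (by omega)) (mk_ne (by omega))
          (seedC _ _ _ _ (by omega) (by omega))
          (seedC _ _ _ _ (by omega) (by omega))
          (seedC _ _ _ _ (by omega) (by omega))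
    · exact phase1 hm₁ x y hx hy h3 (by omega) (by omega)

/-- Phase 5: the bad columns (`x % 3 = 2`) fill up. -/
lemma phase5 (h₂ : 2 ≤ a₂) (hm₁ : a₁ % 3 = 2) (hm₂ : a₂ % 2 = 0)
    (x : ℕ) (hx : x < a₁) (h3 : x % 3 = 2) :
    ∀ y (hy : y < a₂),
      ((⟨x, hx⟩ : Fin a₁), (⟨y, hy⟩ : Fin a₂)) ∈ closure (grid2 a₁ a₂) 3 (seed a₁ a₂) := by
  have hx2 : 2 ≤ x := by omega
  have hx3 : x ≤ a₁ - 3 := by omega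
  have hxm : x - 1 < a₁ := by omega
  have hxp : x + 1 < a₁ := by omega
  have hL : ∀ y (hy : y < a₂),
      ((⟨x - 1, hxm⟩ : Fin a₁), (⟨y, hy⟩ : Fin a₂)) ∈ closure (grid2 a₁ a₂) 3 (seed a₁ a₂) :=
    phase4 h₂ hm₁ hm₂ (x - 1) hxm (by omega) (by omega) (by omega)
  have hR : ∀ y (hy : y < a₂),
      ((⟨x + 1, hxp⟩ : Fin a₁), (⟨y, hy⟩ : Fin a₂)) ∈ closure (grid2 a₁ a₂) 3 (seed a₁ a₂) :=
    phase4 h₂ hm₁ hm₂ (x + 1) hxp (by omega) (by omega) (by omega)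
  by_cases hpar : x % 2 = 1
  · intro y
    induction y with
    | zero => intro hy; exact seedC _ _ _ _ (by omega) (by omega)
    | succ n ih =>
      intro hy
      have hn : n < a₂ := by omega
      exact mem_closure_of_three
        (mk_adj hx hxm hy hy (by omega))
        (mk_adj hx hxp hy hy (by omega))
        (mk_adj hx hx hy hn (by omega))
        (mk_ne (by omega)) (mk_ne (by omega)) (mk_ne (by omega))
        (hL (n + 1) hy) (hR (n + 1) hy) (ih hn)
  · have key : ∀ t y (hy : y < a₂), y + t = a₂ - 1 →
        ((⟨x, hx⟩ : Fin a₁), (⟨y, hy⟩ : Fin a₂)) ∈ closure (grid2 a₁ a₂) 3 (seed a₁ a₂) := by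
      intro t
      induction t with
      | zero =>
        intro y hy h0
        exact seedC _ _ _ _ (by omega) (by omega)
      | succ n ih =>
        intro y hy h0
        have hy1 : y + 1 < a₂ := by omega
        exact mem_closure_of_three
          (mk_adj hx hxm hy hy (by omega))
          (mk_adj hx hxp hy hy (by omega))
          (mk_adj hx hx hy hy1 (by omega))
          (mk_ne (by omega)) (mk_ne (by omega)) (mk_ne (by omega))
          (hL y hy) (hR y hy) (ih (y + 1) hy1 (by omega))
    intro y hy
    exact key (a₂ - 1 - y) y hy (by omega)

end grid

/-! ### Counting lemmas -/

lemma sum_parity (x : ℕ) : ∀ n : ℕ,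
    (∑ y ∈ Finset.range n, if (x + y) % 2 = 1 then 1 else 0) = (n + x % 2) / 2 := by
  intro n
  induction n with
  | zero => simp
  | succ n ih =>
    rw [Finset.sum_range_succ, ih]
    by_cases h : (x + n) % 2 = 1 <;> simp [h] <;> omega

lemma sum_cols (c : ℕ) : ∀ n : ℕ,
    (∑ x ∈ Finset.range n, if x % 3 = 2 then 1 else c) = n / 3 + (n - n / 3) * c := by
  intro n
  induction n with
  | zero => simp
  | succ n ih =>
    rw [Finset.sum_range_succ, ih]
    by_cases h : n % 3 = 2
    · have h1 : (n + 1) / 3 = n / 3 + 1 := by omega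
      have h2 : n + 1 - (n / 3 + 1) = n - n / 3 := by omega
      rw [if_pos h, h1, h2]
      generalize (n - n / 3) * c = q
      omega
    · have h1 : (n + 1) / 3 = n / 3 := by omega
      have h2 : n + 1 - n / 3 = (n - n / 3) + 1 := by omega
      rw [if_neg h, h1, h2, Nat.succ_mul]
      generalize (n - n / 3) * c = q
      omega

/-- **Theorem (Statement 8).** For `a₁ ≡ 2 (mod 3)` and `a₂` even there is a set of size
`(a₁a₂+a₁+a₂-2)/3` whose 3-neighbour closure is everything except `(1,1)` and `(a₁,s)`
(in 1-based coordinates). -/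
theorem fatter_construction (a₁ a₂ : ℕ) (h₁ : 2 ≤ a₁) (h₂ : 2 ≤ a₂)
    (hm₁ : a₁ % 3 = 2) (hm₂ : a₂ % 2 = 0) (s : ℕ)
    (hs : s = if a₁ % 2 = 1 then 1 else a₂) :
    ∃ A₀ : Set (Fin a₁ × Fin a₂),
      3 * A₀.ncard = a₁ * a₂ + a₁ + a₂ - 2 ∧
      closure (grid2 a₁ a₂) 3 A₀ =
        {v : Fin a₁ × Fin a₂ |
          ¬((v.1 : ℕ) + 1 = 1 ∧ (v.2 : ℕ) + 1 = 1) ∧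
          ¬((v.1 : ℕ) + 1 = a₁ ∧ (v.2 : ℕ) + 1 = s)} := by
  classical
  have hs' : (a₁ % 2 = 1 ∧ s = 1) ∨ (a₁ % 2 = 0 ∧ s = a₂) := by
    by_cases h : a₁ % 2 = 1
    · exact Or.inl ⟨h, by rw [hs, if_pos h]⟩
    · exact Or.inr ⟨by omega, by rw [hs, if_neg h]⟩
  refine ⟨seed a₁ a₂, ?_, ?_⟩
  · -- cardinality
    have hset : seed a₁ a₂ = ↑(Finset.univ.filter (fun v : Fin a₁ × Fin a₂ =>
        ((v.1 : ℕ) + (v.2 : ℕ)) % 2 = 1 ∧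
        ¬((v.1 : ℕ) % 3 = 2 ∧ 1 ≤ (v.2 : ℕ) ∧ (v.2 : ℕ) ≤ a₂ - 2))) := by
      ext v; simp [seed]
    rw [hset, Set.ncard_coe_finset, Finset.card_filter, Fintype.sum_prod_type]
    have hcol : ∀ x : Fin a₁,
        (∑ y : Fin a₂, if (((x : ℕ) + (y : ℕ)) % 2 = 1 ∧
          ¬((x : ℕ) % 3 = 2 ∧ 1 ≤ (y : ℕ) ∧ (y : ℕ) ≤ a₂ - 2)) then 1 else 0) =
        if (x : ℕ) % 3 = 2 then 1 else a₂ / 2 := by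
      intro x
      rw [Fin.sum_univ_eq_sum_range (fun yv => if (((x : ℕ) + yv) % 2 = 1 ∧
          ¬((x : ℕ) % 3 = 2 ∧ 1 ≤ yv ∧ yv ≤ a₂ - 2)) then 1 else 0) a₂]
      by_cases hx3 : (x : ℕ) % 3 = 2
      · rw [if_pos hx3]
        by_cases hp : (x : ℕ) % 2 = 1
        · have hw : ∀ y ∈ Finset.range a₂,
              (if (((x : ℕ) + y) % 2 = 1 ∧
                ¬((x : ℕ) % 3 = 2 ∧ 1 ≤ y ∧ y ≤ a₂ - 2)) then 1 else 0) =
              (if y = 0 then 1 else 0) := by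
            intro y hy
            rw [Finset.mem_range] at hy
            exact if_congr (by omega) rfl rfl
          rw [Finset.sum_congr rfl hw, Finset.sum_ite_eq' (Finset.range a₂) 0 (fun _ => 1),
            if_pos (by rw [Finset.mem_range]; omega)]
        · have hw : ∀ y ∈ Finset.range a₂,
              (if (((x : ℕ) + y) % 2 = 1 ∧
                ¬((x : ℕ) % 3 = 2 ∧ 1 ≤ y ∧ y ≤ a₂ - 2)) then 1 else 0) =
              (if y = a₂ - 1 then 1 else 0) := by
            intro y hy
            rw [Finset.mem_range] at hy
            exact if_congr (by omega) rfl rfl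
          rw [Finset.sum_congr rfl hw,
            Finset.sum_ite_eq' (Finset.range a₂) (a₂ - 1) (fun _ => 1),
            if_pos (by rw [Finset.mem_range]; omega)]
      · rw [if_neg hx3]
        have hw : ∀ y ∈ Finset.range a₂,
            (if (((x : ℕ) + y) % 2 = 1 ∧
              ¬((x : ℕ) % 3 = 2 ∧ 1 ≤ y ∧ y ≤ a₂ - 2)) then 1 else 0) =
            (if ((x : ℕ) + y) % 2 = 1 then 1 else 0) := by
          intro y hy
          exact if_congr (by omega) rfl rfl
        rw [Finset.sum_congr rfl hw, sum_parity]
        omega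
    rw [Finset.sum_congr rfl (fun x _ => hcol x),
      Fin.sum_univ_eq_sum_range (fun x => if x % 3 = 2 then 1 else a₂ / 2) a₁,
      sum_cols]
    obtain ⟨k, rfl⟩ : ∃ k, a₁ = 3 * k + 2 := ⟨a₁ / 3, by omega⟩
    obtain ⟨c, rfl⟩ : ∃ c, a₂ = 2 * c := ⟨a₂ / 2, by omega⟩
    have e1 : (3 * k + 2) / 3 = k := by omega
    have e2 : (2 * c) / 2 = c := by omega
    have e3 : 3 * k + 2 - k = 2 * k + 2 := by omega
    rw [e1, e2, e3]
    exact Nat.eq_sub_of_add_eq (by ring)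
  · -- closure identification
    apply Set.eq_of_subset_of_subset
    · -- closure ⊆ T
      apply closure_subset
      · rintro v ⟨hp, hr⟩
        constructor
        · rintro ⟨e1, e2⟩; omega
        · rintro ⟨e1, e2⟩
          rcases hs' with ⟨h5, h6⟩ | ⟨h5, h6⟩ <;> omega
      · intro v hv
        by_contra hnv
        have hnv' : (((v.1 : ℕ) + 1 = 1 ∧ (v.2 : ℕ) + 1 = 1) ∨
            ((v.1 : ℕ) + 1 = a₁ ∧ (v.2 : ℕ) + 1 = s)) := by
          by_contra h
          exact hnv ⟨fun ha => h (Or.inl ha), fun hb => h (Or.inr hb)⟩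
        have hu1 := v.1.isLt
        have hu2 := v.2.isLt
        rcases hnv' with ⟨e1, e2⟩ | ⟨e1, e2⟩
        · have hle := ncard_inter_le_two (G := grid2 a₁ a₂) (v := v)
            (S := {v : Fin a₁ × Fin a₂ |
              ¬((v.1 : ℕ) + 1 = 1 ∧ (v.2 : ℕ) + 1 = 1) ∧
              ¬((v.1 : ℕ) + 1 = a₁ ∧ (v.2 : ℕ) + 1 = s)})
            ((⟨1, by omega⟩ : Fin a₁), (⟨0, by omega⟩ : Fin a₂))
            ((⟨0, by omega⟩ : Fin a₁), (⟨1, by omega⟩ : Fin a₂)) ?_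
          · omega
          · intro u hadj
            rw [grid2_adj] at hadj
            have hb1 := u.1.isLt
            have hb2 := u.2.isLt
            have : ((u.1 : ℕ) = 1 ∧ (u.2 : ℕ) = 0) ∨ ((u.1 : ℕ) = 0 ∧ (u.2 : ℕ) = 1) := by
              omega
            rcases this with ⟨f1, f2⟩ | ⟨f1, f2⟩
            · exact Or.inl (Prod.ext_iff.mpr ⟨Fin.ext f1, Fin.ext f2⟩)
            · exact Or.inr (Prod.ext_iff.mpr ⟨Fin.ext f1, Fin.ext f2⟩)
        · rcases hs' with ⟨h5, h6⟩ | ⟨h5, h6⟩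
          · -- a₁ odd, corner (a₁-1, 0)
            have hle := ncard_inter_le_two (G := grid2 a₁ a₂) (v := v)
              (S := {v : Fin a₁ × Fin a₂ |
                ¬((v.1 : ℕ) + 1 = 1 ∧ (v.2 : ℕ) + 1 = 1) ∧
                ¬((v.1 : ℕ) + 1 = a₁ ∧ (v.2 : ℕ) + 1 = s)})
              ((⟨a₁ - 2, by omega⟩ : Fin a₁), (⟨0, by omega⟩ : Fin a₂))
              ((⟨a₁ - 1, by omega⟩ : Fin a₁), (⟨1, by omega⟩ : Fin a₂)) ?_
            · omega
            · intro u hadj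
              rw [grid2_adj] at hadj
              have hb1 := u.1.isLt
              have hb2 := u.2.isLt
              have : ((u.1 : ℕ) = a₁ - 2 ∧ (u.2 : ℕ) = 0) ∨
                  ((u.1 : ℕ) = a₁ - 1 ∧ (u.2 : ℕ) = 1) := by omega
              rcases this with ⟨f1, f2⟩ | ⟨f1, f2⟩
              · exact Or.inl (Prod.ext_iff.mpr ⟨Fin.ext f1, Fin.ext f2⟩)
              · exact Or.inr (Prod.ext_iff.mpr ⟨Fin.ext f1, Fin.ext f2⟩)
          · -- a₁ even, corner (a₁-1, a₂-1)
            have hle := ncard_inter_le_two (G := grid2 a₁ a₂) (v := v)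
              (S := {v : Fin a₁ × Fin a₂ |
                ¬((v.1 : ℕ) + 1 = 1 ∧ (v.2 : ℕ) + 1 = 1) ∧
                ¬((v.1 : ℕ) + 1 = a₁ ∧ (v.2 : ℕ) + 1 = s)})
              ((⟨a₁ - 2, by omega⟩ : Fin a₁), (⟨a₂ - 1, by omega⟩ : Fin a₂))
              ((⟨a₁ - 1, by omega⟩ : Fin a₁), (⟨a₂ - 2, by omega⟩ : Fin a₂)) ?_
            · omega
            · intro u hadj
              rw [grid2_adj] at hadj
              have hb1 := u.1.isLt
              have hb2 := u.2.isLt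
              have : ((u.1 : ℕ) = a₁ - 2 ∧ (u.2 : ℕ) = a₂ - 1) ∨
                  ((u.1 : ℕ) = a₁ - 1 ∧ (u.2 : ℕ) = a₂ - 2) := by omega
              rcases this with ⟨f1, f2⟩ | ⟨f1, f2⟩
              · exact Or.inl (Prod.ext_iff.mpr ⟨Fin.ext f1, Fin.ext f2⟩)
              · exact Or.inr (Prod.ext_iff.mpr ⟨Fin.ext f1, Fin.ext f2⟩)
    · -- T ⊆ closure
      rintro ⟨⟨x, hx⟩, ⟨y, hy⟩⟩ ⟨hv1, hv2⟩
      simp only at hv1 hv2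
      by_cases h3 : x % 3 = 2
      · exact phase5 h₂ hm₁ hm₂ x hx h3 y hy
      · by_cases hx0 : x = 0
        · subst hx0
          by_cases hpar : (0 + y) % 2 = 1
          · exact seedC _ _ _ _ hpar (by omega)
          · exact phase1 hm₁ 0 y hx hy (by omega) (by omega) (by omega)
        · by_cases hxt : x = a₁ - 1
          · by_cases hpar : (x + y) % 2 = 1
            · exact seedC _ _ _ _ hpar (by omega)
            · by_cases hint : 1 ≤ y ∧ y ≤ a₂ - 2
              · exact phase1 hm₁ x y hx hy h3 hint.1 hint.2
              · exfalso
                rcases hs' with ⟨h5, h6⟩ | ⟨h5, h6⟩ <;> omega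
          · exact phase4 h₂ hm₁ hm₂ x hx h3 (by omega) (by omega) y hy

end BP
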